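/- Let R_N and S_M be closed subspaces of a Hilbert space H with cos ω(R_N, S_M) := inf{‖P_{S_M} r‖ : r ∈ R_N, ‖r‖=1} > 0, and set μ = 1/cos ω. If G(f) ∈ R_N satisfies ⟨P_{S_M} G(f), r⟩ = ⟨P_{S_M} f, r⟩ for all r ∈ R_N, then ‖f − P_{R_N} f‖ ≤ ‖f − G(f)‖ ≤ μ ‖f − P_{R_N} f‖. -/

import Mathlib

open MeasureTheory
open scoped RealInnerProductSpace

section Aux

variable {H : Type*} [NormedAddCommGroup H] [InnerProductSpace ℝ H] [CompleteSpace H]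

private lemma gs_inner_proj_self (K : Submodule ℝ H) [Submodule.HasOrthogonalProjection K] (x : H) :
    ⟪(Submodule.orthogonalProjectionOnto K x : H), x⟫ = ‖(Submodule.orthogonalProjectionOnto K x : H)‖ ^ 2 := by
  have h0 : ⟪x - (Submodule.orthogonalProjectionOnto K x : H), (Submodule.orthogonalProjectionOnto K x : H)⟫ = 0 :=
    Submodule.starProjection_inner_eq_zero (K := K) x _ (Submodule.orthogonalProjectionOnto K x).2
  have h1 : ⟪(Submodule.orthogonalProjectionOnto K x : H), x - (Submodule.orthogonalProjectionOnto K x : H)⟫ = 0 := by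
    rwa [real_inner_comm] at h0
  have h2 : ⟪(Submodule.orthogonalProjectionOnto K x : H), (Submodule.orthogonalProjectionOnto K x : H)⟫
      + ⟪(Submodule.orthogonalProjectionOnto K x : H), x - (Submodule.orthogonalProjectionOnto K x : H)⟫
      = ⟪(Submodule.orthogonalProjectionOnto K x : H), x⟫ := by
    rw [← inner_add_right, add_sub_cancel]
  rw [← h2, h1, real_inner_self_eq_norm_sq, add_zero]

private lemma gs_proj_pythagoras (K : Submodule ℝ H) [Submodule.HasOrthogonalProjection K] (x : H) :
    ‖x - (Submodule.orthogonalProjectionOnto K x : H)‖ ^ 2 = ‖x‖ ^ 2 - ‖(Submodule.orthogonalProjectionOnto K x : H)‖ ^ 2 := by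
  have h1 := norm_sub_sq_real x ((Submodule.orthogonalProjectionOnto K x : H))
  have h2 : ⟪x, (Submodule.orthogonalProjectionOnto K x : H)⟫ = ‖(Submodule.orthogonalProjectionOnto K x : H)‖ ^ 2 := by
    rw [real_inner_comm]; exact gs_inner_proj_self K x
  rw [h2] at h1; linarith

private lemma gs_proj_norm_le (K : Submodule ℝ H) [Submodule.HasOrthogonalProjection K] (x : H) :
    ‖(Submodule.orthogonalProjectionOnto K x : H)‖ ≤ ‖x‖ := by
  have h := gs_proj_pythagoras K x
  have h2 : (0:ℝ) ≤ ‖x - (Submodule.orthogonalProjectionOnto K x : H)‖ ^ 2 := sq_nonneg _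
  nlinarith [norm_nonneg (Submodule.orthogonalProjectionOnto K x : H), norm_nonneg x]

end Aux

set_option maxHeartbeats 2000000 in
theorem generalized_sampling_error_bounds (H : Type*) [NormedAddCommGroup H]
    [InnerProductSpace ℝ H] [CompleteSpace H]
    (RN SM : Submodule ℝ H) [Submodule.HasOrthogonalProjection RN] [Submodule.HasOrthogonalProjection SM]
    (c : ℝ)
    (hc : c = sInf {y : ℝ | ∃ r ∈ RN, ‖r‖ = 1 ∧ y = ‖(Submodule.orthogonalProjectionOnto SM r : H)‖})
    (hcpos : 0 < c) (f G : H) (hG : G ∈ RN)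
    (hcons : ∀ r ∈ RN, ⟪(Submodule.orthogonalProjectionOnto SM G : H), r⟫ = ⟪(Submodule.orthogonalProjectionOnto SM f : H), r⟫) :
    ‖f - (Submodule.orthogonalProjectionOnto RN f : H)‖ ≤ ‖f - G‖ ∧
      ‖f - G‖ ≤ (1 / c) * ‖f - (Submodule.orthogonalProjectionOnto RN f : H)‖ := by
  classical
  set S : Set ℝ := {y : ℝ | ∃ r ∈ RN, ‖r‖ = 1 ∧ y = ‖(Submodule.orthogonalProjectionOnto SM r : H)‖} with hS
  have hbdd : BddBelow S := ⟨0, by rintro y ⟨r, -, -, rfl⟩; positivity⟩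
  -- c ≤ 1
  have hSne : S.Nonempty := by
    by_contra h
    rw [Set.not_nonempty_iff_eq_empty] at h
    rw [h, Real.sInf_empty] at hc
    linarith
  have hc1 : c ≤ 1 := by
    obtain ⟨y, r₀, hr₀, hn₀, rfl⟩ := hSne
    have h1 : c ≤ ‖(Submodule.orthogonalProjectionOnto SM r₀ : H)‖ := hc ▸ csInf_le hbdd ⟨r₀, hr₀, hn₀, rfl⟩
    have h2 := gs_proj_norm_le SM r₀
    rw [hn₀] at h2; linarith
  -- the angle bound
  have hangle : ∀ x ∈ RN, c * ‖x‖ ≤ ‖(Submodule.orthogonalProjectionOnto SM x : H)‖ := by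
    intro x hx
    rcases eq_or_ne x 0 with h0 | h0
    · simp [h0]
    · have hxn : 0 < ‖x‖ := norm_pos_iff.2 h0
      have hmem : ‖(Submodule.orthogonalProjectionOnto SM ((‖x‖⁻¹ : ℝ) • x) : H)‖ ∈ S := by
        refine ⟨(‖x‖⁻¹ : ℝ) • x, RN.smul_mem _ hx, ?_, rfl⟩
        rw [norm_smul, norm_inv, norm_norm, inv_mul_cancel₀ hxn.ne']
      have hle : c ≤ ‖(Submodule.orthogonalProjectionOnto SM ((‖x‖⁻¹ : ℝ) • x) : H)‖ :=
        hc ▸ csInf_le hbdd hmem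
      have heq : ‖(Submodule.orthogonalProjectionOnto SM ((‖x‖⁻¹ : ℝ) • x) : H)‖
          = ‖x‖⁻¹ * ‖(Submodule.orthogonalProjectionOnto SM x : H)‖ := by
        rw [_root_.map_smul]
        push_cast
        rw [norm_smul, norm_inv, norm_norm]
      rw [heq] at hle
      calc c * ‖x‖ ≤ (‖x‖⁻¹ * ‖(Submodule.orthogonalProjectionOnto SM x : H)‖) * ‖x‖ := by
            exact mul_le_mul_of_nonneg_right hle hxn.le
        _ = ‖(Submodule.orthogonalProjectionOnto SM x : H)‖ := by field_simp
  -- notation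
  set P : H := (Submodule.orthogonalProjectionOnto RN f : H) with hP
  have hPmem : P ∈ RN := (Submodule.orthogonalProjectionOnto RN f).2
  set d : H := f - P with hd
  set r : H := G - P with hr
  have hrmem : r ∈ RN := RN.sub_mem hG hPmem
  have hdo : d ∈ RNᗮ := Submodule.sub_starProjection_mem_orthogonal (K := RN) f
  have hdr : ⟪d, r⟫ = 0 := by
    rw [real_inner_comm]; exact hdo r hrmem
  have hfG : f - G = d - r := by rw [hd, hr]; abel
  have hpyth : ‖f - G‖ ^ 2 = ‖d‖ ^ 2 + ‖r‖ ^ 2 := by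
    rw [hfG, norm_sub_sq_real, hdr]; ring
  constructor
  · -- first inequality
    have h1 : ‖d‖ ^ 2 ≤ ‖f - G‖ ^ 2 := by nlinarith [sq_nonneg ‖r‖]
    have := norm_nonneg d
    have := norm_nonneg (f - G)
    nlinarith
  · -- second inequality
    set A : ℝ := ‖(Submodule.orthogonalProjectionOnto SM r : H)‖ with hA
    set B : ℝ := ‖(Submodule.orthogonalProjectionOnto RN ((Submodule.orthogonalProjectionOnto SM r : H)) : H)‖ with hB
    set D : ℝ := ‖d‖ with hD
    set s : ℝ := ‖r‖ with hs
    have hDn : 0 ≤ D := norm_nonneg _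
    have hsn : 0 ≤ s := norm_nonneg _
    have hAn : 0 ≤ A := norm_nonneg _
    have hBn : 0 ≤ B := norm_nonneg _
    -- consistency: ⟪P_S r, r'⟫ = ⟪P_S d, r'⟫ for r' ∈ RN
    have hcons' : ∀ x ∈ RN, ⟪(Submodule.orthogonalProjectionOnto SM r : H), x⟫
        = ⟪(Submodule.orthogonalProjectionOnto SM d : H), x⟫ := by
      intro x hx
      have h1 : (Submodule.orthogonalProjectionOnto SM r : H)
          = (Submodule.orthogonalProjectionOnto SM G : H) - (Submodule.orthogonalProjectionOnto SM P : H) := by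
        rw [hr, map_sub]; push_cast; ring
      have h2 : (Submodule.orthogonalProjectionOnto SM d : H)
          = (Submodule.orthogonalProjectionOnto SM f : H) - (Submodule.orthogonalProjectionOnto SM P : H) := by
        rw [hd, map_sub]; push_cast; ring
      rw [h1, h2, inner_sub_left, inner_sub_left, hcons x hx]
    -- A^2 = ⟪d, P_S r⟫
    have hA2 : A ^ 2 = ⟪d, (Submodule.orthogonalProjectionOnto SM r : H)⟫ := by
      have h1 : ⟪(Submodule.orthogonalProjectionOnto SM r : H), r⟫ = A ^ 2 := gs_inner_proj_self SM r
      have h2 := hcons' r hrmem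
      have h3 : ⟪(Submodule.orthogonalProjectionOnto SM d : H), r⟫
          = ⟪d, (Submodule.orthogonalProjectionOnto SM r : H)⟫ := by
        exact Submodule.inner_starProjection_left_eq_right SM d r
      rw [← h3, ← h2, h1]
    -- ⟪d, P_RN (P_S r)⟫ = 0
    have hdo2 : ⟪d, (Submodule.orthogonalProjectionOnto RN ((Submodule.orthogonalProjectionOnto SM r : H)) : H)⟫ = 0 := by
      rw [real_inner_comm]
      exact hdo _ (Submodule.orthogonalProjectionOnto RN _).2
    -- step (i): A^2 ≤ D * ‖P_S r - P_RN (P_S r)‖ and its square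
    have hkey : A ^ 2 ≤ D * Real.sqrt (A ^ 2 - B ^ 2) := by
      have h1 : A ^ 2 = ⟪d, (Submodule.orthogonalProjectionOnto SM r : H)
          - (Submodule.orthogonalProjectionOnto RN ((Submodule.orthogonalProjectionOnto SM r : H)) : H)⟫ := by
        rw [inner_sub_right, hdo2, sub_zero, ← hA2]
      have h2 := real_inner_le_norm d ((Submodule.orthogonalProjectionOnto SM r : H)
          - (Submodule.orthogonalProjectionOnto RN ((Submodule.orthogonalProjectionOnto SM r : H)) : H))
      have h3 : ‖(Submodule.orthogonalProjectionOnto SM r : H)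
          - (Submodule.orthogonalProjectionOnto RN ((Submodule.orthogonalProjectionOnto SM r : H)) : H)‖
          = Real.sqrt (A ^ 2 - B ^ 2) := by
        have := gs_proj_pythagoras RN ((Submodule.orthogonalProjectionOnto SM r : H))
        rw [← hA, ← hB] at this
        rw [← this, Real.sqrt_sq (norm_nonneg _)]
      rw [h3] at h2
      linarith [h1 ▸ h2]
    have hiSq : A ^ 4 ≤ D ^ 2 * (A ^ 2 - B ^ 2) := by
      have hs1 : 0 ≤ A ^ 2 - B ^ 2 := by
        have := gs_proj_pythagoras RN ((Submodule.orthogonalProjectionOnto SM r : H))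
        rw [← hA, ← hB] at this
        nlinarith [sq_nonneg ‖(Submodule.orthogonalProjectionOnto SM r : H)
          - (Submodule.orthogonalProjectionOnto RN ((Submodule.orthogonalProjectionOnto SM r : H)) : H)‖]
      have h4 : (A ^ 2) ^ 2 ≤ (D * Real.sqrt (A ^ 2 - B ^ 2)) ^ 2 := by
        apply pow_le_pow_left₀ (sq_nonneg A) hkey
      have h5 : (D * Real.sqrt (A ^ 2 - B ^ 2)) ^ 2 = D ^ 2 * (A ^ 2 - B ^ 2) := by
        rw [mul_pow, Real.sq_sqrt hs1]
      nlinarith [h4, h5]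
    -- step (ii): A^2 ≤ B * s
    have hii : A ^ 2 ≤ B * s := by
      have h1 : ⟪(Submodule.orthogonalProjectionOnto SM r : H)
          - (Submodule.orthogonalProjectionOnto RN ((Submodule.orthogonalProjectionOnto SM r : H)) : H), r⟫ = 0 :=
        Submodule.starProjection_inner_eq_zero (K := RN) _ r hrmem
      have h2 : ⟪(Submodule.orthogonalProjectionOnto RN ((Submodule.orthogonalProjectionOnto SM r : H)) : H), r⟫
          = ⟪(Submodule.orthogonalProjectionOnto SM r : H), r⟫ := by
        rw [inner_sub_left] at h1; linarith
      have h3 : ⟪(Submodule.orthogonalProjectionOnto SM r : H), r⟫ = A ^ 2 := gs_inner_proj_self SM r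
      have h4 := real_inner_le_norm
        ((Submodule.orthogonalProjectionOnto RN ((Submodule.orthogonalProjectionOnto SM r : H)) : H)) r
      rw [h2, h3] at h4
      exact h4
    -- step (iii): angle
    have hiii : c * s ≤ A := hangle r hrmem
    -- conclude c^2 * (D^2 + s^2) ≤ D^2
    have hmain : c ^ 2 * (D ^ 2 + s ^ 2) ≤ D ^ 2 := by
      rcases eq_or_lt_of_le hsn with hs0 | hs0
      · -- s = 0
        have : s = 0 := hs0.symm
        rw [this]
        have hcc : c ^ 2 ≤ 1 := by nlinarith
        nlinarith [hcc, sq_nonneg D]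
      · -- s > 0
        have hApos : 0 < A := lt_of_lt_of_le (by positivity) hiii
        -- A^4 ≤ B^2 s^2
        have h6 : A ^ 4 ≤ B ^ 2 * s ^ 2 := by nlinarith [hii, hAn, hBn, hsn]
        -- A^4 s^2 ≤ D^2 A^2 s^2 - D^2 A^4
        have h7 : A ^ 4 * s ^ 2 ≤ D ^ 2 * A ^ 2 * s ^ 2 - D ^ 2 * A ^ 4 := by
          nlinarith [hiSq, h6, sq_nonneg D, sq_nonneg s]
        -- A^2 (s^2 + D^2) ≤ D^2 s^2
        have hA2pos : 0 < A ^ 2 := by positivity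
        have h8 : A ^ 2 * (s ^ 2 + D ^ 2) ≤ D ^ 2 * s ^ 2 := by
          have hmm : A ^ 2 * (A ^ 2 * (s ^ 2 + D ^ 2)) ≤ A ^ 2 * (D ^ 2 * s ^ 2) := by
            linarith [h7]
          exact le_of_mul_le_mul_left hmm hA2pos
        have h9 : c ^ 2 * s ^ 2 ≤ A ^ 2 := by
          have := mul_le_mul hiii hiii (mul_nonneg hcpos.le hsn) hAn
          nlinarith [this]
        have hs2pos : 0 < s ^ 2 := by positivity
        have h9' : c ^ 2 * s ^ 2 * (s ^ 2 + D ^ 2) ≤ A ^ 2 * (s ^ 2 + D ^ 2) :=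
          mul_le_mul_of_nonneg_right h9 (by positivity)
        have hmm2 : s ^ 2 * (c ^ 2 * (D ^ 2 + s ^ 2)) ≤ s ^ 2 * D ^ 2 := by
          linarith [h9', h8]
        exact le_of_mul_le_mul_left hmm2 hs2pos
    -- finish
    have hEn : 0 ≤ ‖f - G‖ := norm_nonneg _
    have h10 : (c * ‖f - G‖) ^ 2 ≤ D ^ 2 := by
      have : ‖f - G‖ ^ 2 = D ^ 2 + s ^ 2 := hpyth
      nlinarith [hmain, this]
    have h11 : c * ‖f - G‖ ≤ D := by
      nlinarith [h10, hDn, mul_nonneg hcpos.le hEn]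
    rw [div_mul_eq_mul_div, le_div_iff₀ hcpos]
    linarith [h11]
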